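/- Let S_m be a finite subsample of points of ℝ^k of size m ≥ 2 with trimmed sample mean T_m = T̂(S_m) and trimmed sample covariance C_m = Ĉ(S_m), and suppose C_m is positive definite. Let X* ∈ S_m attain the maximum of (X − T_m)ᵀ C_m⁻¹ (X − T_m) over X ∈ S_m, and let S_{m−1} = S_m \ {X*} with trimmed sample covariance C_{m−1} = Ĉ(S_{m−1}). Then det C_{m−1} ≤ det C_m. -/

import Mathlib

open MeasureTheory Filter Topology
open scoped ENNReal Classical

noncomputable section

abbrev Vec (k : ℕ) := EuclideanSpace ℝ (Fin k)

def memK {k : ℕ} (P : Measure (Vec k)) (γ : ℝ) (φ : Vec k → ℝ) : Prop :=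
  Measurable φ ∧ (∀ x, 0 ≤ φ x ∧ φ x ≤ 1) ∧ γ ≤ ∫ x, φ x ∂P ∧
    Integrable (fun x => ‖x‖ ^ 2 * φ x) P

def trimMean {k : ℕ} (P : Measure (Vec k)) (φ : Vec k → ℝ) : Vec k :=
  (∫ x, φ x ∂P)⁻¹ • ∫ x, φ x • x ∂P

def trimCov {k : ℕ} (P : Measure (Vec k)) (φ : Vec k → ℝ) : Matrix (Fin k) (Fin k) ℝ :=
  Matrix.of fun i j =>
    (∫ x, φ x ∂P)⁻¹ * ∫ x, φ x * ((x i - trimMean P φ i) * (x j - trimMean P φ j)) ∂P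

def ellipsoid {k : ℕ} (μ : Vec k) (S : Matrix (Fin k) (Fin k) ℝ) (ρ : ℝ) : Set (Vec k) :=
  {x | ∑ i, ∑ j, (x i - μ i) * S⁻¹ i j * (x j - μ j) ≤ ρ ^ 2}

def trimRadius {k : ℕ} (P : Measure (Vec k)) (γ : ℝ) (φ : Vec k → ℝ) : ℝ :=
  sInf {s : ℝ | 0 < s ∧ γ ≤ (P (ellipsoid (trimMean P φ) (trimCov P φ) s)).toReal}

def Minimizing {k : ℕ} (P : Measure (Vec k)) (γ : ℝ) (φ : Vec k → ℝ) : Prop :=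
  memK P γ φ ∧ ∀ ψ, memK P γ ψ → (trimCov P φ).det ≤ (trimCov P ψ).det

def IsMCD {k : ℕ} (P : Measure (Vec k)) (γ : ℝ) (T : Vec k)
    (C : Matrix (Fin k) (Fin k) ℝ) : Prop :=
  ∃ φ, Minimizing P γ φ ∧ T = trimMean P φ ∧ C = trimCov P φ

def HypSmall {k : ℕ} (P : Measure (Vec k)) (γ : ℝ) : Prop :=
  ∀ (a : Vec k) (c : ℝ), a ≠ 0 → (P {x | (inner ℝ a x : ℝ) = c}).toReal < γ

def WeakLim {k : ℕ} (P : ℕ → Measure (Vec k)) (P₀ : Measure (Vec k)) : Prop :=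
  ∀ f : BoundedContinuousFunction (Vec k) ℝ,
    Tendsto (fun n => ∫ x, f x ∂(P n)) atTop (𝓝 (∫ x, f x ∂P₀))

def sampleMean {k : ℕ} {ι : Type*} (x : ι → Vec k) (S : Finset ι) : Vec k :=
  (S.card : ℝ)⁻¹ • ∑ i ∈ S, x i

def sampleCov {k : ℕ} {ι : Type*} (x : ι → Vec k) (S : Finset ι) :
    Matrix (Fin k) (Fin k) ℝ :=
  Matrix.of fun a b => (S.card : ℝ)⁻¹ *
    ∑ i ∈ S, (x i a - sampleMean x S a) * (x i b - sampleMean x S b)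

/-- Mahalanobis-type quadratic form `vᵀ C⁻¹ v`. -/
def mahal {k : ℕ} (C : Matrix (Fin k) (Fin k) ℝ) (v : Vec k) : ℝ :=
  ∑ a, ∑ b, v a * C⁻¹ a b * v b

lemma vec_sum_apply {ι : Type*} {k : ℕ} (F : Finset ι) (x : ι → Vec k) (a : Fin k) :
    (∑ i ∈ F, x i) a = ∑ i ∈ F, x i a := by
  induction F using Finset.cons_induction with
  | empty => rfl
  | cons i F hi ih => rw [Finset.sum_cons, Finset.sum_cons, PiLp.add_apply, ih]

lemma sampleMean_apply {ι : Type*} {k : ℕ} (x : ι → Vec k) (F : Finset ι) (a : Fin k) :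
    sampleMean x F a = (F.card : ℝ)⁻¹ * ∑ i ∈ F, x i a := by
  rw [sampleMean, PiLp.smul_apply, smul_eq_mul, vec_sum_apply]

lemma pow_ineq (n : ℝ) (hn : 0 ≤ n) (k : ℕ) : (n+1)^k * (n - k) ≤ n^(k+1) := by
  induction k with
  | zero => simp
  | succ k ih =>
    have h1 : (n+1)^(k+1) * (n - (k+1:ℕ)) = n * ((n+1)^k * (n-k)) - ((k:ℝ)+1) * (n+1)^k := by
      push_cast; ring
    have h2 : n * ((n+1)^k * (n-k)) ≤ n * n^(k+1) := mul_le_mul_of_nonneg_left ih hn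
    have h3 : (0:ℝ) ≤ ((k:ℝ)+1) * (n+1)^k := by positivity
    have h4 : n * n^(k+1) = n^(k+2) := by ring
    rw [h1]; linarith

lemma sum_sq_eq {ι : Type*} {k : ℕ} (x : ι → Vec k) (F : Finset ι) (a b : Fin k) :
    ∑ i ∈ F, (x i a - sampleMean x F a) * (x i b - sampleMean x F b)
      = ∑ i ∈ F, x i a * x i b - F.card * (sampleMean x F a * sampleMean x F b) := by
  rcases eq_or_ne F.card 0 with h0 | h0
  · rw [Finset.card_eq_zero] at h0; subst h0; simp
  · have hc : (F.card : ℝ) ≠ 0 := Nat.cast_ne_zero.mpr h0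
    have hma : ∑ i ∈ F, x i a = F.card * sampleMean x F a := by
      rw [sampleMean_apply]; field_simp
    have hmb : ∑ i ∈ F, x i b = F.card * sampleMean x F b := by
      rw [sampleMean_apply]; field_simp
    have : ∑ i ∈ F, (x i a - sampleMean x F a) * (x i b - sampleMean x F b)
        = ∑ i ∈ F, x i a * x i b - sampleMean x F b * ∑ i ∈ F, x i a
          - sampleMean x F a * ∑ i ∈ F, x i b + F.card * (sampleMean x F a * sampleMean x F b) := by
      rw [Finset.sum_congr rfl (fun i _ => by ring :
        ∀ i ∈ F, (x i a - sampleMean x F a) * (x i b - sampleMean x F b)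
          = x i a * x i b - sampleMean x F b * x i a - sampleMean x F a * x i b
            + sampleMean x F a * sampleMean x F b)]
      simp [Finset.sum_add_distrib, Finset.sum_sub_distrib, Finset.mul_sum]
    rw [this, hma, hmb]; ring

lemma cov_erase {ι : Type*} [DecidableEq ι] {k : ℕ} (x : ι → Vec k) (S : Finset ι)
    (j : ι) (hj : j ∈ S) (h2 : 2 ≤ S.card) (a b : Fin k) :
    sampleCov x (S.erase j) a b
      = ((S.card:ℝ)/((S.card:ℝ)-1)) * sampleCov x S a b
        - ((S.card:ℝ)/((S.card:ℝ)-1)^2) *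
            ((x j a - sampleMean x S a) * (x j b - sampleMean x S b)) := by
  have hm1 : 1 ≤ S.card := le_trans one_le_two h2
  have hcard' : ((S.erase j).card : ℝ) = (S.card : ℝ) - 1 := by
    rw [Finset.card_erase_of_mem hj]
    push_cast [Nat.cast_sub hm1]
    ring
  have hm0 : (S.card : ℝ) ≠ 0 := by positivity
  have hn0 : (S.card : ℝ) - 1 ≠ 0 := by
    have : (2:ℝ) ≤ (S.card:ℝ) := by exact_mod_cast h2
    intro h; linarith
  have hA : ∑ i ∈ S.erase j, x i a = ∑ i ∈ S, x i a - x j a := Finset.sum_erase_eq_sub hj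
  have hB : ∑ i ∈ S.erase j, x i b = ∑ i ∈ S, x i b - x j b := Finset.sum_erase_eq_sub hj
  have hP : ∑ i ∈ S.erase j, x i a * x i b = ∑ i ∈ S, x i a * x i b - x j a * x j b :=
    Finset.sum_erase_eq_sub hj
  rw [show sampleCov x (S.erase j) a b = ((S.erase j).card : ℝ)⁻¹ *
      ∑ i ∈ S.erase j, (x i a - sampleMean x (S.erase j) a) * (x i b - sampleMean x (S.erase j) b) from rfl,
    show sampleCov x S a b = ((S.card : ℝ))⁻¹ *
      ∑ i ∈ S, (x i a - sampleMean x S a) * (x i b - sampleMean x S b) from rfl,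
    sum_sq_eq, sum_sq_eq, sampleMean_apply, sampleMean_apply, sampleMean_apply, sampleMean_apply,
    hcard', hA, hB, hP]
  field_simp
  ring

theorem det_le_of_remove_farthest {k : ℕ} (hk : 1 ≤ k) {ι : Type*} [DecidableEq ι]
    (x : ι → Vec k) (S : Finset ι) (hcard : 2 ≤ S.card)
    (hpd : (sampleCov x S).PosDef) (j : ι) (hj : j ∈ S)
    (hmax : ∀ i ∈ S, mahal (sampleCov x S) (x i - sampleMean x S)
      ≤ mahal (sampleCov x S) (x j - sampleMean x S)) :
    (sampleCov x (S.erase j)).det ≤ (sampleCov x S).det := by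

  classical
  set C := sampleCov x S with hCdef
  set T := sampleMean x S with hTdef
  set m : ℝ := (S.card : ℝ) with hmdef
  have hm2 : (2:ℝ) ≤ m := by rw [hmdef]; exact_mod_cast hcard
  have hn0 : (0:ℝ) < m - 1 := by linarith
  have hm0 : (0:ℝ) < m := by linarith
  set nn : ℝ := m - 1 with hnndef
  set d : Vec k := x j - T with hddef
  have hda : ∀ a, d a = x j a - T a := fun a => rfl
  have hunit : IsUnit C.det := hpd.det_pos.ne'.isUnit
  -- matrix identity
  have hkey : sampleCov x (S.erase j)
      = (m/nn) • (C + Matrix.replicateCol Unit ((-(nn)⁻¹) • (d : Fin k → ℝ)) * Matrix.replicateRow Unit (d : Fin k → ℝ)) := by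
    ext a b
    rw [cov_erase x S j hj hcard a b]
    simp only [Matrix.smul_apply, Matrix.add_apply, Matrix.mul_apply, Matrix.replicateCol_apply,
      Matrix.replicateRow_apply, Finset.univ_unique, Finset.sum_singleton, Pi.smul_apply,
      PiLp.smul_apply, smul_eq_mul, hda]
    rw [← hCdef, ← hTdef, ← hmdef, ← hnndef]
    field_simp
    ring
  -- determinant formula
  have hscal : (1 + Matrix.replicateRow Unit (d : Fin k → ℝ) * C⁻¹ *
      Matrix.replicateCol Unit ((-(nn)⁻¹) • (d : Fin k → ℝ))).det = 1 - nn⁻¹ * mahal C d := by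
    rw [Matrix.det_unique]
    simp only [Matrix.add_apply, Matrix.one_apply_eq, Matrix.mul_apply, Matrix.replicateCol_apply,
      Matrix.replicateRow_apply, Pi.smul_apply, smul_eq_mul]
    rw [mahal, sub_eq_add_neg]
    congr 1
    conv_rhs => rw [Finset.sum_comm]
    rw [Finset.mul_sum, ← Finset.sum_neg_distrib]
    apply Finset.sum_congr rfl
    intro b _
    rw [Finset.sum_mul, Finset.mul_sum, ← Finset.sum_neg_distrib]
    apply Finset.sum_congr rfl
    intro a _
    simp only [PiLp.smul_apply, smul_eq_mul]
    ring
  have hdet : (sampleCov x (S.erase j)).det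
      = (m/nn)^k * (C.det * (1 - nn⁻¹ * mahal C d)) := by
    rw [hkey, Matrix.det_smul, Matrix.det_add_replicateCol_mul_replicateRow hunit, hscal, Fintype.card_fin]
  -- trace identity: sum of mahal = m * k
  have hCsum : ∀ a b, ∑ i ∈ S, (x i a - T a) * (x i b - T b) = m * C a b := by
    intro a b
    have : C a b = m⁻¹ * ∑ i ∈ S, (x i a - T a) * (x i b - T b) := rfl
    rw [this]; field_simp
  have hsymm : ∀ a b, C a b = C b a := by
    intro a b
    show (m⁻¹ * ∑ i ∈ S, (x i a - T a) * (x i b - T b))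
      = (m⁻¹ * ∑ i ∈ S, (x i b - T b) * (x i a - T a))
    congr 1
    exact Finset.sum_congr rfl fun i _ => mul_comm _ _
  have hsum : ∑ i ∈ S, mahal C (x i - T) = m * k := by
    have expand : ∀ i, mahal C (x i - T)
        = ∑ a, ∑ b, (x i a - T a) * C⁻¹ a b * (x i b - T b) := fun i => rfl
    calc ∑ i ∈ S, mahal C (x i - T)
        = ∑ a, ∑ b, C⁻¹ a b * ∑ i ∈ S, (x i a - T a) * (x i b - T b) := by
          simp only [expand]
          rw [Finset.sum_comm]
          apply Finset.sum_congr rfl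
          intro a _
          rw [Finset.sum_comm]
          apply Finset.sum_congr rfl
          intro b _
          rw [Finset.mul_sum]
          apply Finset.sum_congr rfl
          intro i _
          ring
      _ = m * ∑ a, ∑ b, C⁻¹ a b * C b a := by
          rw [Finset.mul_sum]
          apply Finset.sum_congr rfl
          intro a _
          rw [Finset.mul_sum]
          apply Finset.sum_congr rfl
          intro b _
          rw [hCsum, hsymm a b]
          ring
      _ = m * ∑ a, (C⁻¹ * C) a a := by
          congr 1
      _ = m * k := by
          rw [Matrix.nonsing_inv_mul C hunit]
          simp [Matrix.one_apply]
  -- q ≥ k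
  set q := mahal C d with hqdef
  have hq : (k:ℝ) ≤ q := by
    have h1 : ∑ i ∈ S, mahal C (x i - T) ≤ ∑ i ∈ S, q :=
      Finset.sum_le_sum hmax
    rw [hsum, Finset.sum_const, nsmul_eq_mul, ← hmdef] at h1
    exact le_of_mul_le_mul_left h1 hm0
  -- final inequality
  have hnn0 : (0:ℝ) < nn := hn0
  have h1 : 1 - nn⁻¹ * q ≤ (nn - k)/nn := by
    rw [sub_div, div_self hnn0.ne']
    have : (k:ℝ)/nn ≤ nn⁻¹ * q := by
      rw [div_eq_inv_mul]
      exact mul_le_mul_of_nonneg_left hq (inv_nonneg.mpr hnn0.le)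
    linarith
  have h2 : (m/nn)^k * ((nn - k)/nn) ≤ 1 := by
    have hineq := pow_ineq nn hnn0.le k
    have hmn : m = nn + 1 := by rw [hnndef]; ring
    rw [div_pow, div_mul_div_comm, div_le_one (by positivity)]
    calc m^k * (nn - k) = (nn+1)^k * (nn - k) := by rw [hmn]
      _ ≤ nn^(k+1) := hineq
      _ = nn^k * nn := by ring
  have h3 : (m/nn)^k * (1 - nn⁻¹ * q) ≤ 1 :=
    le_trans (mul_le_mul_of_nonneg_left h1 (by positivity)) h2
  rw [hdet]
  calc (m/nn)^k * (C.det * (1 - nn⁻¹ * q)) = C.det * ((m/nn)^k * (1 - nn⁻¹ * q)) := by ring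
    _ ≤ C.det * 1 := mul_le_mul_of_nonneg_left h3 hpd.det_pos.le
    _ = C.det := mul_one _

end
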